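/- arXiv:1807.01107 — 2 statements merged into one kernel-verified Lean document; each statement's English description precedes it below -/
import Mathlib

section
/- Let G be a p-group with cyclic center and rank at least 2, and let K ⊴ G with K ≅ C_p × C_p. If A₁,…,A_p are the subgroups of K of order p that are not central in G, then all Aᵢ are conjugate in G, C_G(K) = C_G(Aᵢ) for each i, and C_G(K) has index p in G. -/
/-- Let `G` be a finite `p`-group with cyclic center and rank at least 2, and let
`K ⊴ G` with `K ≅ C_p × C_p`.  If `A₁, …, A_p` are the subgroups of `K` of order
`p` that are not central in `G`, then all `Aᵢ` are conjugate in `G`,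
`C_G(K) = C_G(Aᵢ)` for each `i`, and `C_G(K)` has index `p` in `G`. -/
theorem noncentral_subgroups_of_normal_CpCp
    (p : ℕ) [Fact p.Prime] (G : Type*) [Group G] [Fintype G]
    (hG : IsPGroup p G) (hZcyc : IsCyclic (Subgroup.center G))
    (hrank : ∃ E : Subgroup G,
      (∀ x ∈ E, x ^ p = 1) ∧ (∀ x ∈ E, ∀ y ∈ E, x * y = y * x) ∧ Nat.card E = p ^ 2)
    (K : Subgroup G) (hKnorm : K.Normal)
    (hK : Nonempty (K ≃* Multiplicative (ZMod p × ZMod p))) :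
    (∀ A₁ A₂ : Subgroup G, A₁ ≤ K → A₂ ≤ K → Nat.card A₁ = p → Nat.card A₂ = p →
      ¬ A₁ ≤ Subgroup.center G → ¬ A₂ ≤ Subgroup.center G →
      ∃ g : G, Subgroup.map (MulAut.conj g).toMonoidHom A₁ = A₂) ∧
    (∀ A : Subgroup G, A ≤ K → Nat.card A = p → ¬ A ≤ Subgroup.center G →
      Subgroup.centralizer (K : Set G) = Subgroup.centralizer (A : Set G)) ∧
    (Subgroup.centralizer (K : Set G)).index = p := by
  classical
  obtain ⟨e⟩ := hK
  have hp : p.Prime := Fact.out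
  have hp1 : 1 < p := hp.one_lt
  haveI : NeZero p := ⟨hp.ne_zero⟩
  haveI : Fact (1 < p) := ⟨hp1⟩
  -- cardinality and exponent of K
  have hKcard : Nat.card K = p ^ 2 := by
    rw [Nat.card_congr e.toEquiv]
    show Nat.card (ZMod p × ZMod p) = p ^ 2
    rw [Nat.card_prod, Nat.card_zmod]
    ring
  have hKexp : ∀ x ∈ K, x ^ p = 1 := by
    intro x hx
    have h : e (⟨x, hx⟩ ^ p) = e 1 := by
      rw [map_pow, map_one]
      have hv : ∀ v : Multiplicative (ZMod p × ZMod p), v ^ p = 1 := by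
        intro v
        have h0 : p • v.toAdd = 0 := by
          ext <;> simp [nsmul_eq_mul, ZMod.natCast_self]
        have h1 := congrArg Multiplicative.ofAdd h0
        rw [ofAdd_nsmul] at h1
        simpa using h1
      exact hv _
    have := e.injective h
    simpa using congrArg (Subtype.val) this
  -- power-reduction helpers
  have hred : ∀ x : G, x ^ p = 1 → ∀ n : ℕ, x ^ (n % p) = x ^ n := by
    intro x hx n
    conv_rhs => rw [← Nat.div_add_mod n p]
    rw [pow_add, pow_mul, hx, one_pow, one_mul]
  have hadd : ∀ x : G, x ^ p = 1 → ∀ s t : ZMod p,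
      x ^ (s + t).val = x ^ s.val * x ^ t.val := by
    intro x hx s t
    rw [ZMod.val_add, hred x hx, pow_add]
  have hmulv : ∀ x : G, x ^ p = 1 → ∀ s t : ZMod p,
      x ^ (s * t).val = (x ^ s.val) ^ t.val := by
    intro x hx s t
    rw [ZMod.val_mul, hred x hx, pow_mul]
  -- a central element z of K of order p
  have hzex : ∃ z : G, z ∈ K ∧ z ∈ Subgroup.center G ∧ z ≠ 1 := by
    haveI := hKnorm
    have hG' : IsPGroup p (ConjAct G) := hG.of_equiv ConjAct.toConjAct
    have hdvd : p ∣ Nat.card K := by rw [hKcard]; exact dvd_pow_self p two_ne_zero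
    have ha : (1 : K) ∈ MulAction.fixedPoints (ConjAct G) K := fun g => smul_one g
    obtain ⟨b, hb, hb1⟩ :=
      hG'.exists_fixed_point_of_prime_dvd_card_of_fixed_point (α := K) hdvd ha
    refine ⟨(b : G), b.2, Subgroup.mem_center_iff.mpr fun g => ?_,
      fun h => hb1 (Subtype.ext (by simpa using h.symm))⟩
    have h2 := congrArg Subtype.val (hb (ConjAct.toConjAct g))
    rw [ConjAct.Subgroup.val_conj_smul] at h2
    rw [ConjAct.smul_def, ConjAct.ofConjAct_toConjAct, mul_inv_eq_iff_eq_mul] at h2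
    exact h2
  obtain ⟨z, hzK, hzc, hz1⟩ := hzex
  have hzp : z ^ p = 1 := hKexp z hzK
  have hoz : orderOf z = p := orderOf_eq_prime hzp hz1
  have hcomm : ∀ x : G, x * z = z * x := fun x => (Subgroup.mem_center_iff.mp hzc x)
  have hCz : ∀ (x : G) (n : ℕ), Commute x (z ^ n) :=
    fun x n => Commute.pow_right (hcomm x) n
  -- K is not central
  have hKnc : ¬ (K : Set G) ⊆ (Subgroup.center G : Set G) := by
    intro hle
    have hle' : K ≤ Subgroup.center G := hle
    haveI : IsCyclic K :=
      isCyclic_of_surjective _ (Subgroup.subgroupOfEquivOfLe hle').surjective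
    obtain ⟨g₀, hg₀⟩ := IsCyclic.exists_generator (α := K)
    have ho : orderOf g₀ = p ^ 2 := by
      rw [orderOf_eq_card_of_forall_mem_zpowers hg₀, hKcard]
    have h1 : g₀ ^ p = 1 := by
      apply Subtype.ext
      push_cast
      exact hKexp _ g₀.2
    have := orderOf_dvd_of_pow_eq_one h1
    rw [ho] at this
    have := Nat.le_of_dvd hp.pos this
    nlinarith
  -- a noncentral element a of K
  obtain ⟨a, haK, hanc⟩ := Set.not_subset.mp hKnc
  have hap : a ^ p = 1 := hKexp a haK
  have ha1 : a ≠ 1 := fun h => hanc (h ▸ (Subgroup.center G).one_mem)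
  have hoa : orderOf a = p := orderOf_eq_prime hap ha1
  have haz : a ∉ Subgroup.zpowers z := fun h =>
    hanc ((Subgroup.zpowers_le.mpr hzc) h)
  -- the two cyclic subgroups ⟨a⟩, ⟨z⟩ intersect trivially
  have hkey : ∀ u : G, u ∈ Subgroup.zpowers z → u ∈ Subgroup.zpowers a → u = 1 := by
    intro u huz hua
    by_contra h1
    have huK : u ∈ K := (Subgroup.zpowers_le.mpr hzK) huz
    have hou : orderOf u = p := orderOf_eq_prime (hKexp u huK) h1
    have l1 : Subgroup.zpowers u ≤ Subgroup.zpowers z := Subgroup.zpowers_le.mpr huz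
    have e1 : Subgroup.zpowers u = Subgroup.zpowers z :=
      Subgroup.eq_of_le_of_card_ge l1 (by rw [Nat.card_zpowers, Nat.card_zpowers, hou, hoz])
    have l2 : Subgroup.zpowers u ≤ Subgroup.zpowers a := Subgroup.zpowers_le.mpr hua
    have e2 : Subgroup.zpowers u = Subgroup.zpowers a :=
      Subgroup.eq_of_le_of_card_ge l2 (by rw [Nat.card_zpowers, Nat.card_zpowers, hou, hoa])
    exact haz (e1 ▸ e2 ▸ Subgroup.mem_zpowers a)
  -- power injectivity
  have hpinj : ∀ x : G, orderOf x = p → ∀ s t : ZMod p, x ^ s.val = x ^ t.val → s = t := by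
    intro x hx s t h
    have h2 := pow_eq_pow_iff_modEq.mp h
    rw [hx] at h2
    have h3 : s.val = t.val := by
      have := h2
      unfold Nat.ModEq at this
      rwa [Nat.mod_eq_of_lt (ZMod.val_lt s), Nat.mod_eq_of_lt (ZMod.val_lt t)] at this
    exact ZMod.val_injective p h3
  -- uniqueness of the (s, t) decomposition
  have huniq : ∀ s t s' t' : ZMod p,
      a ^ s.val * z ^ t.val = a ^ s'.val * z ^ t'.val → s = s' ∧ t = t' := by
    intro s t s' t' h
    have h2 : (a ^ s'.val)⁻¹ * a ^ s.val = z ^ t'.val * (z ^ t.val)⁻¹ := by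
      have h3 := congrArg (fun w => (a ^ s'.val)⁻¹ * w * (z ^ t.val)⁻¹) h
      simpa [mul_assoc] using h3
    have hmem1 : (a ^ s'.val)⁻¹ * a ^ s.val ∈ Subgroup.zpowers a :=
      mul_mem (inv_mem ((Subgroup.zpowers a).pow_mem (Subgroup.mem_zpowers a) _))
        ((Subgroup.zpowers a).pow_mem (Subgroup.mem_zpowers a) _)
    have hmem2 : (a ^ s'.val)⁻¹ * a ^ s.val ∈ Subgroup.zpowers z := by
      rw [h2]
      exact mul_mem ((Subgroup.zpowers z).pow_mem (Subgroup.mem_zpowers z) _)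
        (inv_mem ((Subgroup.zpowers z).pow_mem (Subgroup.mem_zpowers z) _))
    have hone := hkey _ hmem2 hmem1
    have e2 : z ^ t'.val = z ^ t.val := by
      rw [hone] at h2
      exact mul_inv_eq_one.mp h2.symm
    exact ⟨hpinj a hoa s s' (inv_mul_eq_one.mp hone).symm, hpinj z hoz t t' e2.symm⟩
  -- every element of K decomposes
  have hdec : ∀ k ∈ K, ∃ s t : ZMod p, k = a ^ s.val * z ^ t.val := by
    have hmemF : ∀ st : ZMod p × ZMod p, a ^ st.1.val * z ^ st.2.val ∈ K :=
      fun st => mul_mem (K.pow_mem haK _) (K.pow_mem hzK _)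
    have hFbij : Function.Bijective
        (fun st : ZMod p × ZMod p => (⟨a ^ st.1.val * z ^ st.2.val, hmemF st⟩ : K)) := by
      rw [Nat.bijective_iff_injective_and_card]
      constructor
      · intro x y hxy
        have h := huniq _ _ _ _ (congrArg Subtype.val hxy)
        exact Prod.ext h.1 h.2
      · rw [Nat.card_prod, Nat.card_zmod, hKcard]; ring
    intro k hk
    obtain ⟨⟨s, t⟩, hst⟩ := hFbij.2 ⟨k, hk⟩
    exact ⟨s, t, (congrArg Subtype.val hst).symm⟩
  -- Fermat iterated
  have hfermat : ∀ (i : ZMod p) (N : ℕ), i ^ (p ^ N) = i := by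
    intro i N
    induction N with
    | zero => simp
    | succ n ih => rw [pow_succ, pow_mul, ih, ZMod.pow_card]
  -- key structure: conjugation sends a to a * z^j
  have jexists : ∀ h : G, ∃ j : ZMod p, h * a * h⁻¹ = a * z ^ j.val := by
    intro h
    obtain ⟨i, u, hiu⟩ := hdec (h * a * h⁻¹) (hKnorm.conj_mem a haK h)
    have hiter : ∀ n : ℕ, ∃ w : ZMod p,
        h ^ n * a * (h ^ n)⁻¹ = a ^ ((i ^ n : ZMod p)).val * z ^ w.val := by
      intro n
      induction n with
      | zero =>
        refine ⟨0, ?_⟩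
        simp [ZMod.val_one]
      | succ n ih =>
        obtain ⟨w, hw⟩ := ih
        refine ⟨u * i ^ n + w, ?_⟩
        have e1 : h ^ (n + 1) * a * (h ^ (n + 1))⁻¹
            = h * (h ^ n * a * (h ^ n)⁻¹) * h⁻¹ := by group
        rw [e1, hw]
        have e2 : h * (a ^ ((i ^ n : ZMod p)).val * z ^ w.val) * h⁻¹
            = (h * a * h⁻¹) ^ ((i ^ n : ZMod p)).val * z ^ w.val := by
          rw [conj_pow]
          have : z ^ w.val * h⁻¹ = h⁻¹ * z ^ w.val := ((hCz h⁻¹ w.val)).symm.eq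
          calc h * (a ^ ((i ^ n : ZMod p)).val * z ^ w.val) * h⁻¹
              = h * a ^ ((i ^ n : ZMod p)).val * (z ^ w.val * h⁻¹) := by group
            _ = h * a ^ ((i ^ n : ZMod p)).val * (h⁻¹ * z ^ w.val) := by rw [this]
            _ = h * a ^ ((i ^ n : ZMod p)).val * h⁻¹ * z ^ w.val := by group
        rw [e2, hiu]
        have e3 : (a ^ i.val * z ^ u.val) ^ ((i ^ n : ZMod p)).val
            = a ^ ((i ^ (n + 1) : ZMod p)).val * z ^ ((u * i ^ n : ZMod p)).val := by
          rw [(hCz (a ^ i.val) u.val).mul_pow]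
          rw [← hmulv a hap i (i ^ n), ← pow_succ']
          rw [← hmulv z hzp u (i ^ n)]
        rw [e3, mul_assoc, ← hadd z hzp]
    obtain ⟨N, hN⟩ := hG h
    obtain ⟨w, hw⟩ := hiter (p ^ N)
    rw [hN] at hw
    simp only [one_mul, inv_one, mul_one] at hw
    have h0 : a ^ (1 : ZMod p).val * z ^ (0 : ZMod p).val
        = a ^ ((i ^ (p ^ N) : ZMod p)).val * z ^ w.val := by
      rw [ZMod.val_one, pow_one, ZMod.val_zero, pow_zero, mul_one]
      exact hw
    have h1 := (huniq _ _ _ _ h0).1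
    rw [hfermat i N] at h1
    exact ⟨u, by rw [hiu, ← h1, ZMod.val_one, pow_one]⟩
  have juniq : ∀ (h : G) (j j' : ZMod p),
      h * a * h⁻¹ = a * z ^ j.val → h * a * h⁻¹ = a * z ^ j'.val → j = j' := by
    intro h j j' h1 h2
    have h3 : a ^ (1 : ZMod p).val * z ^ j.val = a ^ (1 : ZMod p).val * z ^ j'.val := by
      rw [ZMod.val_one, pow_one, ← h1, ← h2]
    exact (huniq _ _ _ _ h3).2
  set jmap : G → ZMod p := fun h => Classical.choose (jexists h) with hjmap
  have jspec : ∀ h : G, h * a * h⁻¹ = a * z ^ (jmap h).val :=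
    fun h => Classical.choose_spec (jexists h)
  have jone : jmap 1 = 0 := by
    refine juniq 1 _ _ (jspec 1) ?_
    simp
  have jadd : ∀ h₁ h₂ : G, jmap (h₁ * h₂) = jmap h₁ + jmap h₂ := by
    intro h₁ h₂
    refine juniq (h₁ * h₂) _ _ (jspec _) ?_
    have e1 : h₁ * h₂ * a * (h₁ * h₂)⁻¹ = h₁ * (h₂ * a * h₂⁻¹) * h₁⁻¹ := by group
    rw [e1, jspec h₂]
    have e2 : h₁ * (a * z ^ (jmap h₂).val) * h₁⁻¹ = (h₁ * a * h₁⁻¹) * z ^ (jmap h₂).val := by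
      have : z ^ (jmap h₂).val * h₁⁻¹ = h₁⁻¹ * z ^ (jmap h₂).val := ((hCz h₁⁻¹ _)).symm.eq
      calc h₁ * (a * z ^ (jmap h₂).val) * h₁⁻¹
          = h₁ * a * (z ^ (jmap h₂).val * h₁⁻¹) := by group
        _ = h₁ * a * (h₁⁻¹ * z ^ (jmap h₂).val) := by rw [this]
        _ = h₁ * a * h₁⁻¹ * z ^ (jmap h₂).val := by group
    rw [e2, jspec h₁, mul_assoc, ← hadd z hzp]
  -- general conjugation formula
  have hconj2 : ∀ (h : G) (s t : ZMod p),
      h * (a ^ s.val * z ^ t.val) * h⁻¹ = a ^ s.val * z ^ (jmap h * s + t).val := by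
    intro h s t
    have e2 : h * (a ^ s.val * z ^ t.val) * h⁻¹ = (h * a * h⁻¹) ^ s.val * z ^ t.val := by
      rw [conj_pow]
      have : z ^ t.val * h⁻¹ = h⁻¹ * z ^ t.val := ((hCz h⁻¹ t.val)).symm.eq
      calc h * (a ^ s.val * z ^ t.val) * h⁻¹
          = h * a ^ s.val * (z ^ t.val * h⁻¹) := by group
        _ = h * a ^ s.val * (h⁻¹ * z ^ t.val) := by rw [this]
        _ = h * a ^ s.val * h⁻¹ * z ^ t.val := by group
    rw [e2, jspec h]
    rw [(hCz a (jmap h).val).mul_pow, ← hmulv z hzp (jmap h) s]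
    rw [mul_assoc, ← hadd z hzp]
  -- jmap detects the centralizer of K
  have jzero : ∀ h : G, jmap h = 0 ↔ h ∈ Subgroup.centralizer (K : Set G) := by
    intro h
    constructor
    · intro hj
      rw [Subgroup.mem_centralizer_iff]
      intro k hk
      obtain ⟨s, t, hst⟩ := hdec k hk
      have := hconj2 h s t
      rw [hj, zero_mul, zero_add, ← hst] at this
      rw [mul_inv_eq_iff_eq_mul] at this
      rw [hst] at this ⊢
      exact this.symm
    · intro hc
      refine juniq h _ _ (jspec h) ?_
      have h1 : a * h = h * a := Subgroup.mem_centralizer_iff.mp hc a haK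
      rw [ZMod.val_zero, pow_zero, mul_one, ← h1]
      group
  -- a noncentral g
  have hcne : Subgroup.centralizer (K : Set G) ≠ ⊤ := by
    intro h
    exact hKnc (Subgroup.centralizer_eq_top_iff_subset.mp h)
  obtain ⟨g, hg⟩ : ∃ g : G, g ∉ Subgroup.centralizer (K : Set G) := by
    by_contra h
    push_neg at h
    exact hcne ((Subgroup.eq_top_iff' _).mpr h)
  have hjg : jmap g ≠ 0 := fun h => hg ((jzero g).mp h)
  -- jmap on powers
  have jpow : ∀ n : ℕ, jmap (g ^ n) = (n : ZMod p) * jmap g := by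
    intro n
    induction n with
    | zero => simpa using jone
    | succ n ih =>
      rw [pow_succ, jadd, ih]
      push_cast
      ring
  -- normalization of noncentral subgroups of K of order p
  have hgen : ∀ A : Subgroup G, A ≤ K → Nat.card A = p → ¬ A ≤ Subgroup.center G →
      ∃ u : ZMod p, A = Subgroup.zpowers (a * z ^ u.val) := by
    intro A hAK hAcard hAnc
    have hAne : A ≠ ⊥ := by
      intro h
      rw [h, Subgroup.card_bot] at hAcard
      omega
    obtain ⟨x, hx⟩ := Subgroup.ne_bot_iff_exists_ne_one.mp hAne
    have hxK : (x : G) ∈ K := hAK x.2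
    have hx1 : (x : G) ≠ 1 := fun h => hx (Subtype.ext h)
    have hox : orderOf (x : G) = p := orderOf_eq_prime (hKexp _ hxK) hx1
    have hzpA : Subgroup.zpowers (x : G) ≤ A := Subgroup.zpowers_le.mpr x.2
    have hA : A = Subgroup.zpowers (x : G) :=
      (Subgroup.eq_of_le_of_card_ge hzpA (by rw [Nat.card_zpowers, hox, hAcard])).symm
    obtain ⟨s, t, hst⟩ := hdec x hxK
    have hs0 : s ≠ 0 := by
      intro hs
      apply hAnc
      rw [hA]
      apply Subgroup.zpowers_le.mpr
      rw [hst, hs, ZMod.val_zero, pow_zero, one_mul]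
      exact (Subgroup.center G).pow_mem hzc _
    refine ⟨s⁻¹ * t, ?_⟩
    set b := a * z ^ ((s⁻¹ * t : ZMod p)).val with hb
    have hbval : (x : G) ^ (s⁻¹ : ZMod p).val = b := by
      rw [hst, (hCz (a ^ s.val) t.val).mul_pow]
      rw [← hmulv a hap s s⁻¹, ← hmulv z hzp t s⁻¹]
      rw [mul_inv_cancel₀ hs0, mul_comm t s⁻¹]
      rw [ZMod.val_one, pow_one]
    have hbK : b ∈ K := mul_mem haK (K.pow_mem hzK _)
    have hb1 : b ≠ 1 := by
      intro h
      have h2 : a ^ (1 : ZMod p).val * z ^ ((s⁻¹ * t : ZMod p)).val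
          = a ^ (0 : ZMod p).val * z ^ (0 : ZMod p).val := by
        simp only [ZMod.val_one, pow_one, ZMod.val_zero, pow_zero, mul_one]
        exact h
      have := (huniq _ _ _ _ h2).1
      exact one_ne_zero this
    have hob : orderOf b = p := orderOf_eq_prime (hKexp _ hbK) hb1
    have hle : Subgroup.zpowers b ≤ A := by
      apply Subgroup.zpowers_le.mpr
      rw [← hbval]
      exact A.pow_mem x.2 _
    exact (Subgroup.eq_of_le_of_card_ge hle (by rw [Nat.card_zpowers, hob, hAcard])).symm
  -- the homomorphism G →* ZMod p
  set f : G →* Multiplicative (ZMod p) :=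
    { toFun := fun h => Multiplicative.ofAdd (jmap h)
      map_one' := by show Multiplicative.ofAdd (jmap 1) = 1; rw [jone]; rfl
      map_mul' := fun x y => by
        show Multiplicative.ofAdd (jmap (x * y)) = _
        rw [jadd]; rfl } with hf
  have hker : f.ker = Subgroup.centralizer (K : Set G) := by
    ext h
    rw [MonoidHom.mem_ker]
    show Multiplicative.ofAdd (jmap h) = 1 ↔ _
    rw [ofAdd_eq_one]
    exact jzero h
  have hsurj : Function.Surjective f := by
    intro m
    refine ⟨g ^ ((m.toAdd * (jmap g)⁻¹).val), ?_⟩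
    show Multiplicative.ofAdd (jmap _) = m
    rw [jpow]
    have hcast : (((m.toAdd * (jmap g)⁻¹).val : ℕ) : ZMod p) = m.toAdd * (jmap g)⁻¹ := by
      rw [ZMod.natCast_val, ZMod.cast_id]
    rw [hcast, mul_assoc, inv_mul_cancel₀ hjg, mul_one]
    exact ofAdd_toAdd m
  refine ⟨?_, ?_, ?_⟩
  · -- conjugacy
    intro A₁ A₂ h1K h2K h1card h2card h1nc h2nc
    obtain ⟨u₁, hA₁⟩ := hgen A₁ h1K h1card h1nc
    obtain ⟨u₂, hA₂⟩ := hgen A₂ h2K h2card h2nc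
    set n := (((u₂ - u₁) * (jmap g)⁻¹ : ZMod p)).val with hn
    have hjn : jmap (g ^ n) = u₂ - u₁ := by
      rw [jpow, hn]
      rw [ZMod.natCast_val, ZMod.cast_id, mul_assoc, inv_mul_cancel₀ hjg, mul_one]
    refine ⟨g ^ n, ?_⟩
    have hkeyeq : g ^ n * (a * z ^ u₁.val) * (g ^ n)⁻¹ = a * z ^ u₂.val := by
      have h1 : a * z ^ u₁.val = a ^ (1 : ZMod p).val * z ^ u₁.val := by
        rw [ZMod.val_one, pow_one]
      rw [h1, hconj2 (g ^ n) 1 u₁, hjn, mul_one, sub_add_cancel, ZMod.val_one, pow_one]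
    rw [hA₁, MonoidHom.map_zpowers, hA₂]
    have heq : (MulAut.conj (g ^ n)).toMonoidHom (a * z ^ u₁.val) = a * z ^ u₂.val := by
      show (MulAut.conj (g ^ n)) (a * z ^ u₁.val) = a * z ^ u₂.val
      rw [MulAut.conj_apply]
      exact hkeyeq
    rw [heq]
  · -- centralizers agree
    intro A hAK hAcard hAnc
    obtain ⟨u, hA⟩ := hgen A hAK hAcard hAnc
    apply le_antisymm
    · exact Subgroup.centralizer_le hAK
    · intro h hc
      have hbA : (a * z ^ u.val) ∈ A := hA ▸ Subgroup.mem_zpowers _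
      have h1 : (a * z ^ u.val) * h = h * (a * z ^ u.val) :=
        Subgroup.mem_centralizer_iff.mp hc _ hbA
      have h2 : h * (a * z ^ u.val) * h⁻¹ = a * z ^ u.val := by
        rw [← h1]; group
      have h3 : a * z ^ u.val = a ^ (1 : ZMod p).val * z ^ u.val := by
        rw [ZMod.val_one, pow_one]
      rw [h3, hconj2 h 1 u] at h2
      have h4 := (huniq _ _ _ _ h2).2
      have h5 : jmap h * 1 + u = u → jmap h = 0 := by
        intro hq
        rw [mul_one] at hq
        linear_combination hq
      exact (jzero h).mp (h5 h4)
  · -- index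
    rw [← hker, Subgroup.index_ker, MonoidHom.range_eq_top.mpr hsurj]
    rw [Subgroup.card_top]
    rw [Nat.card_congr Multiplicative.toAdd, Nat.card_zmod]
end

section
/- Let G be a finite p-group with cyclic center of order divisible by p, K = ⟨a,z⟩ ⊴ G with K ≅ C_p × C_p, z generating the central subgroup Z = K ∩ Z(G), and suppose c ∈ G satisfies [c,a] = z. Then aca⁻¹ = z⁻¹c; consequently, any two subgroups C, C' of order p contained in CZ and different from Z are conjugate in G. -/
open scoped Pointwise


/-- Let `G` be a finite `p`-group with cyclic center of order divisible by `p`,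
`K = ⟨a,z⟩ ⊴ G` with `K ≅ C_p × C_p`, `z` generating the central subgroup
`Z = K ∩ Z(G)`, and suppose `c ∈ G` satisfies `[c,a] = z` (where
`[c,a] = cac⁻¹a⁻¹`).  Then `aca⁻¹ = z⁻¹c`; consequently, any two subgroups
`C, C'` of order `p` contained in `CZ = ⟨c⟩⟨z⟩` and different from `Z = ⟨z⟩` are
conjugate in `G`. -/
theorem conj_relation_and_conjugacy_in_CZ
    (p : ℕ) [Fact p.Prime] (G : Type*) [Group G] [Fintype G]
    (hG : IsPGroup p G) (hZcyc : IsCyclic (Subgroup.center G))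
    (z a c : G) (hz : z ∈ Subgroup.center G) (hzord : orderOf z = p)
    (hcord : orderOf c = p) (hcomm : c * a * c⁻¹ * a⁻¹ = z) :
    a * c * a⁻¹ = z⁻¹ * c ∧
      ∀ C C' : Subgroup G,
        C ≤ Subgroup.zpowers c ⊔ Subgroup.zpowers z →
        C' ≤ Subgroup.zpowers c ⊔ Subgroup.zpowers z →
        Nat.card C = p → Nat.card C' = p →
        C ≠ Subgroup.zpowers z → C' ≠ Subgroup.zpowers z →
        ∃ g : G, Subgroup.map (MulAut.conj g).toMonoidHom C = C' := by
  have hp := Fact.out (p := p.Prime)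
  have hzc : ∀ g : G, Commute z g := fun g => ((Subgroup.mem_center_iff.mp hz) g).symm
  have hzk : ∀ (k : ℤ) (g : G), z ^ k * g = g * z ^ k := fun k g => (hzc g).zpow_left k
  -- z ≠ 1
  have hz1 : z ≠ 1 := by
    intro h
    rw [h, orderOf_one] at hzord
    exact hp.one_lt.ne' hzord.symm
  -- key relation
  have key : c * a = z * (a * c) := by
    calc c * a = (c * a * c⁻¹ * a⁻¹) * (a * c) := by group
    _ = z * (a * c) := by rw [hcomm]
  have h2 : a * c = z⁻¹ * (c * a) := by rw [key]; group
  have h1 : a * c * a⁻¹ = z⁻¹ * c := by rw [h2]; group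
  have h1' : a⁻¹ * c * a = z * c := by
    calc a⁻¹ * c * a = a⁻¹ * (c * a) := by group
    _ = a⁻¹ * (z * (a * c)) := by rw [key]
    _ = (a⁻¹ * z) * (a * c) := by group
    _ = (z * a⁻¹) * (a * c) := by rw [← (hzc a⁻¹).eq]
    _ = z * c := by group
  -- power relation
  have hpow : ∀ k : ℤ, a ^ k * c * (a ^ k)⁻¹ = z ^ (-k) * c := by
    intro k
    induction k using Int.induction_on with
    | zero => simp
    | succ n ih =>
      have e1 : a ^ ((n : ℤ) + 1) * c * (a ^ ((n : ℤ) + 1))⁻¹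
          = a * (a ^ (n : ℤ) * c * (a ^ (n : ℤ))⁻¹) * a⁻¹ := by group
      rw [e1, ih]
      calc a * (z ^ (-(n : ℤ)) * c) * a⁻¹ = (a * z ^ (-(n : ℤ))) * (c * a⁻¹) := by group
      _ = (z ^ (-(n : ℤ)) * a) * (c * a⁻¹) := by rw [hzk]
      _ = z ^ (-(n : ℤ)) * (a * c * a⁻¹) := by group
      _ = z ^ (-(n : ℤ)) * (z⁻¹ * c) := by rw [h1]
      _ = z ^ (-((n : ℤ) + 1)) * c := by
          rw [← mul_assoc, ← zpow_neg_one, ← zpow_add]; ring_nf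
    | pred n ih =>
      have e1 : a ^ (-(n : ℤ) - 1) * c * (a ^ (-(n : ℤ) - 1))⁻¹
          = a⁻¹ * (a ^ (-(n : ℤ)) * c * (a ^ (-(n : ℤ)))⁻¹) * a := by group
      rw [e1, ih]
      have e2 : (- -(n : ℤ)) = (n : ℤ) := by ring
      rw [e2]
      have e3 : (-(-(n : ℤ) - 1)) = (n : ℤ) + 1 := by ring
      rw [e3]
      calc a⁻¹ * (z ^ ((n : ℤ)) * c) * a = (a⁻¹ * z ^ ((n : ℤ))) * (c * a) := by group
      _ = (z ^ ((n : ℤ)) * a⁻¹) * (c * a) := by rw [hzk]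
      _ = z ^ ((n : ℤ)) * (a⁻¹ * c * a) := by group
      _ = z ^ ((n : ℤ)) * (z * c) := by rw [h1']
      _ = z ^ ((n : ℤ) + 1) * c := by rw [zpow_add_one]; group
  refine ⟨h1, ?_⟩
  have hconjz : ∀ (g : G) (k : ℤ), g * z ^ k * g⁻¹ = z ^ k := fun g k => by
    rw [← hzk]; group
  have hNz : (Subgroup.zpowers z).Normal := by
    constructor
    intro x hx g
    obtain ⟨k, rfl⟩ := Subgroup.mem_zpowers_iff.mp hx
    rw [hconjz]
    exact Subgroup.zpow_mem_zpowers z k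
  have decomp : ∀ x ∈ Subgroup.zpowers c ⊔ Subgroup.zpowers z, ∃ m n : ℤ, x = c ^ m * z ^ n := by
    intro x hx
    have hx' : x ∈ (Subgroup.zpowers c : Set G) * (Subgroup.zpowers z : Set G) := by
      rw [← Subgroup.mul_normal]; exact hx
    obtain ⟨u, hu, v, hv, rfl⟩ := hx'
    obtain ⟨m, rfl⟩ := Subgroup.mem_zpowers_iff.mp hu
    obtain ⟨n, rfl⟩ := Subgroup.mem_zpowers_iff.mp hv
    exact ⟨m, n, rfl⟩
  have cardz : Nat.card (Subgroup.zpowers z) = p := by rw [Nat.card_zpowers, hzord]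
  have key2 : ∀ C : Subgroup G,
      C ≤ Subgroup.zpowers c ⊔ Subgroup.zpowers z → Nat.card C = p →
      C ≠ Subgroup.zpowers z → ∃ i : ℤ, C = Subgroup.zpowers (c * z ^ i) := by
    intro C hle hcard hne
    have horder : ∀ x ∈ C, x ≠ 1 → orderOf x = p := by
      intro x hxC hx1
      have hdvd : orderOf x ∣ p := by
        have := orderOf_dvd_natCard (⟨x, hxC⟩ : C)
        rwa [Subgroup.orderOf_mk, hcard] at this
      rcases hp.eq_one_or_self_of_dvd _ hdvd with h | h
      · exact absurd (orderOf_eq_one_iff.mp h) hx1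
      · exact h
    have hgen : ∀ x ∈ C, x ≠ 1 → C = Subgroup.zpowers x := by
      intro x hxC hx1
      refine (Subgroup.eq_of_le_of_card_ge (Subgroup.zpowers_le.mpr hxC) ?_).symm
      rw [Nat.card_zpowers, horder x hxC hx1, hcard]
    have hCbot : C ≠ ⊥ := by
      intro h
      rw [h] at hcard
      simp only [Subgroup.card_bot] at hcard
      exact hp.one_lt.ne hcard
    obtain ⟨w, hwC, hw1⟩ := (Subgroup.bot_or_exists_ne_one C).resolve_left hCbot
    obtain ⟨m, n, rfl⟩ := decomp w (hle hwC)
    by_cases hm : ((m : ZMod p) = 0)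
    · exfalso
      have hpd : (p : ℤ) ∣ m := by rwa [ZMod.intCast_zmod_eq_zero_iff_dvd] at hm
      have hc1 : c ^ m = 1 := by
        apply orderOf_dvd_iff_zpow_eq_one.mp
        rw [hcord]; exact hpd
      have hwz : c ^ m * z ^ n ∈ Subgroup.zpowers z := by
        rw [hc1, one_mul]; exact Subgroup.zpow_mem_zpowers z n
      have hleq : C ≤ Subgroup.zpowers z := by
        rw [hgen _ hwC hw1]
        exact Subgroup.zpowers_le.mpr hwz
      exact hne (Subgroup.eq_of_le_of_card_ge hleq (by rw [cardz, hcard]))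
    · obtain ⟨m', hmm'⟩ : ∃ m' : ℤ, ((m * m' : ℤ) : ZMod p) = 1 := by
        refine ⟨(((m : ZMod p)⁻¹ : ZMod p).val : ℤ), ?_⟩
        push_cast
        rw [ZMod.natCast_val, ZMod.cast_id]
        exact mul_inv_cancel₀ hm
      have hcmm : c ^ (m * m') = c := by
        have h0 : c ^ (m * m') = c ^ (1 : ℤ) := by
          rw [zpow_eq_zpow_iff_modEq, hcord]
          apply (ZMod.intCast_eq_intCast_iff _ _ _).mp
          rw [hmm']; push_cast; ring
        simpa using h0
      have hw' : (c ^ m * z ^ n) ^ m' = c * z ^ (n * m') := by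
        rw [((hzc (c ^ m)).zpow_left n).symm.mul_zpow, ← zpow_mul, ← zpow_mul, hcmm]
      have hne1 : c * z ^ (n * m') ≠ 1 := by
        intro h
        have hcz : c = (z ^ (n * m'))⁻¹ := eq_inv_of_mul_eq_one_left h
        have hzz : (z ^ (n * m'))⁻¹ * a * ((z ^ (n * m'))⁻¹)⁻¹ * a⁻¹ = 1 := by
          rw [inv_inv, ← zpow_neg, ← hzk]
          group
        rw [hcz, hzz] at hcomm
        exact hz1 hcomm.symm
      have hmem : c * z ^ (n * m') ∈ C := by
        rw [← hw']; exact C.zpow_mem hwC m'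
      exact ⟨n * m', hgen _ hmem hne1⟩
  intro C C' hC hC' hcC hcC' hneC hneC'
  obtain ⟨i, rfl⟩ := key2 C hC hcC hneC
  obtain ⟨j, rfl⟩ := key2 C' hC' hcC' hneC'
  refine ⟨a ^ (i - j), ?_⟩
  rw [MonoidHom.map_zpowers]
  congr 1
  show (MulAut.conj (a ^ (i - j))) (c * z ^ i) = c * z ^ j
  rw [MulAut.conj_apply]
  calc a ^ (i - j) * (c * z ^ i) * (a ^ (i - j))⁻¹
      = (a ^ (i - j) * c * (a ^ (i - j))⁻¹) * (a ^ (i - j) * z ^ i * (a ^ (i - j))⁻¹) := by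
        group
    _ = (z ^ (-(i - j)) * c) * z ^ i := by rw [hpow, hconjz]
    _ = c * (z ^ (-(i - j)) * z ^ i) := by rw [hzk]; group
    _ = c * z ^ j := by
        rw [← zpow_add]
        congr 1
        ring
end
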